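/- Let A be a measurable space, ε ≥ 0, C and C' countable sets, (P_τ)_{τ∈C} and (Q_{τ'})_{τ'∈C'} families of probability measures on A, 𝒯 and 𝒯' probability distributions on C and C' respectively, and ν a coupling of 𝒯 and 𝒯' (a probability distribution on C × C' whose marginals are 𝒯 and 𝒯'). Then Δ_ε( Σ_{τ} 𝒯(τ)·P_τ , Σ_{τ'} 𝒯'(τ')·Q_{τ'} ) ≤ Σ_{(τ,τ')} ν(τ,τ')·Δ_ε(P_τ, Q_{τ'}). -/

import Mathlib

open MeasureTheory Real
open scoped ENNReal

noncomputable section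

/-- Hockey-stick divergence / privacy curve `Δ_ε(μ,ν)`. -/
def hsDiv {A : Type*} [MeasurableSpace A] (ε : ℝ) (μ ν : Measure A) : ℝ :=
  ⨆ S : {S : Set A // MeasurableSet S}, ((μ S.1).toReal - Real.exp ε * (ν S.1).toReal)

/-- Subsampling map induced by a template. -/
def SAMP {W : Type*} {n m : ℕ} (τ : Fin m → Fin n) (x : Fin n → W) : Fin m → W :=
  fun i => x (τ i)

/-- Product measure with `j`-th factor replaced by the Dirac measure at `v`. -/
def fixEntry {W : Type*} [MeasurableSpace W] {n : ℕ} (μbar : Fin n → Measure W)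
    (j : Fin n) (v : W) : Measure (Fin n → W) :=
  Measure.pi (Function.update μbar j (Measure.dirac v))

open Classical in
/-- Sampling privacy curve `SPC^j` : conditional expectation over templates containing `j`. -/
def SPCj {W A : Type*} [MeasurableSpace W] [MeasurableSpace A] {n m : ℕ}
    (F : (Fin m → W) → A) (μbar : Fin n → Measure W)
    (𝒯 : (Fin m → Fin n) → ℝ≥0∞) (j : Fin n) (ε : ℝ) : ℝ :=
  (∑ τ : Fin m → Fin n, if j ∈ Set.range τ then (𝒯 τ).toReal *
      (⨆ v : W, ⨆ w : W, hsDiv ε (Measure.map (fun x => F (SAMP τ x)) (fixEntry μbar j v))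
        (Measure.map (fun x => F (SAMP τ x)) (fixEntry μbar j w))) else 0) /
  (∑ τ : Fin m → Fin n, if j ∈ Set.range τ then (𝒯 τ).toReal else 0)

open Classical in
/-- Uniform distribution on injective templates (sampling without replacement). -/
def uniformInj (n m : ℕ) : (Fin m → Fin n) → ℝ≥0∞ :=
  fun τ => if Function.Injective τ then
    ((Finset.univ.filter (fun σ : Fin m → Fin n => Function.Injective σ)).card : ℝ≥0∞)⁻¹ else 0

open Classical in
/-- Conditioning of a distribution on templates to an event. -/
def condDist {n m : ℕ} (𝒯 : (Fin m → Fin n) → ℝ≥0∞) (E : Set (Fin m → Fin n)) :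
    (Fin m → Fin n) → ℝ≥0∞ :=
  fun τ => if τ ∈ E then 𝒯 τ / (∑ σ : Fin m → Fin n, if σ ∈ E then 𝒯 σ else 0) else 0

/-- The increasing enumeration of a finite set of indices, as a sampling template. -/
def poissonTemplate {n : ℕ} (s : Finset (Fin n)) : Fin s.card → Fin n :=
  fun i => (s.orderIsoOfFin rfl i : Fin n)

/-- Statistical privacy curve of a query. -/
def Phi {W A : Type*} [MeasurableSpace W] [MeasurableSpace A] {k : ℕ}
    (μbar : Fin k → Measure W) (F : (Fin k → W) → A) (ε : ℝ) : ℝ :=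
  ⨆ j : Fin k, ⨆ v : W, ⨆ w : W,
    hsDiv ε (Measure.map F (fixEntry μbar j v)) (Measure.map F (fixEntry μbar j w))

/-- trade-off function -/
def tradeOff {A : Type*} [MeasurableSpace A] (P Q : Measure A) (α : ℝ) : ℝ :=
  sInf { y | ∃ S : Set A, MeasurableSet S ∧ (P Sᶜ).toReal ≤ α ∧ y = (Q S).toReal }

/-- total variation distance -/
def tvDist {A : Type*} [MeasurableSpace A] (μ ν : Measure A) : ℝ :=
  ⨆ S : {S : Set A // MeasurableSet S}, |(μ S.1).toReal - (ν S.1).toReal|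

/-- support of a measure -/
def msupport {X : Type*} [TopologicalSpace X] [MeasurableSpace X] (μ : Measure X) : Set X :=
  {x | ∀ U : Set X, IsOpen U → x ∈ U → 0 < μ U}

/-- τ ≈_j σ -/
def ApproxAt {n m : ℕ} (j : Fin n) (τ σ : Fin m → Fin n) : Prop :=
  ∀ i, (τ i ≠ j → σ i = τ i) ∧ (τ i = j → σ i ≠ j)

/-- F-samplable -/
def FSamplable {W : Type*} [MeasurableSpace W] {n m : ℕ}
    (μbar : Fin n → Measure W) (F : (Fin m → W) → ℝ) : Prop :=
  ∀ (τ σ : Fin m → Fin n) (j : Fin n) (v w : W) (ε : ℝ), 0 ≤ ε →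
    ∃ S : Set ℝ, ((∃ a, S = Set.Iic a) ∨ (∃ a, S = Set.Ici a) ∨ S = ∅) ∧
      ((Measure.map (fun x => F (SAMP τ x)) (fixEntry μbar j v)) S).toReal -
        Real.exp ε * ((Measure.map (fun x => F (SAMP σ x)) (fixEntry μbar j w)) S).toReal =
      hsDiv ε (Measure.map (fun x => F (SAMP τ x)) (fixEntry μbar j v))
        (Measure.map (fun x => F (SAMP σ x)) (fixEntry μbar j w))

lemma toReal_le_one {A : Type*} [MeasurableSpace A] (μ : Measure A) [IsProbabilityMeasure μ]
    (S : Set A) : (μ S).toReal ≤ 1 := by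
  have := prob_le_one (μ := μ) (s := S)
  exact ENNReal.toReal_mono ENNReal.one_ne_top this |>.trans_eq ENNReal.toReal_one

lemma hsDiv_bdd {A : Type*} [MeasurableSpace A] (ε : ℝ) (μ ν : Measure A)
    [IsProbabilityMeasure μ] [IsProbabilityMeasure ν] :
    BddAbove (Set.range fun S : {S : Set A // MeasurableSet S} =>
      ((μ S.1).toReal - Real.exp ε * (ν S.1).toReal)) := by
  refine ⟨1, ?_⟩
  rintro x ⟨S, rfl⟩; simp only
  have h1 : (μ S.1).toReal ≤ 1 := toReal_le_one μ S.1
  have h2 : 0 ≤ Real.exp ε * (ν S.1).toReal :=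
    mul_nonneg (Real.exp_pos ε).le ENNReal.toReal_nonneg
  linarith

lemma hsDiv_nonneg {A : Type*} [MeasurableSpace A] (ε : ℝ) (μ ν : Measure A)
    [IsProbabilityMeasure μ] [IsProbabilityMeasure ν] : 0 ≤ hsDiv ε μ ν := by
  have := le_ciSup (hsDiv_bdd ε μ ν) ⟨∅, MeasurableSet.empty⟩
  simpa [hsDiv] using this

lemma hsDiv_le_one {A : Type*} [MeasurableSpace A] (ε : ℝ) (μ ν : Measure A)
    [IsProbabilityMeasure μ] [IsProbabilityMeasure ν] : hsDiv ε μ ν ≤ 1 := by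
  apply ciSup_le
  intro S
  have h1 : (μ S.1).toReal ≤ 1 := toReal_le_one μ S.1
  have h2 : 0 ≤ Real.exp ε * (ν S.1).toReal :=
    mul_nonneg (Real.exp_pos ε).le ENNReal.toReal_nonneg
  linarith
/-- the hockey-stick divergence of two mixtures is bounded by the
coupling-weighted average of the pairwise divergences. -/
theorem hsDiv_mixture_le_coupling
    {A C C' : Type*} [MeasurableSpace A] [Countable C] [Countable C']
    (ε : ℝ) (hε : 0 ≤ ε)
    (P : C → Measure A) (hP : ∀ τ, IsProbabilityMeasure (P τ))
    (Q : C' → Measure A) (hQ : ∀ τ', IsProbabilityMeasure (Q τ'))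
    (T : C → ℝ≥0∞) (hT : ∑' τ, T τ = 1)
    (T' : C' → ℝ≥0∞) (hT' : ∑' τ', T' τ' = 1)
    (ν : C × C' → ℝ≥0∞)
    (hνfst : ∀ τ, ∑' τ' : C', ν (τ, τ') = T τ)
    (hνsnd : ∀ τ', ∑' τ : C, ν (τ, τ') = T' τ') :
    hsDiv ε (Measure.sum fun τ => T τ • P τ) (Measure.sum fun τ' => T' τ' • Q τ')
      ≤ ∑' q : C × C', (ν q).toReal * hsDiv ε (P q.1) (Q q.2) := by
  have hν1 : ∑' q : C × C', ν q = 1 := by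
    refine (ENNReal.tsum_prod (f := fun a b => ν (a, b))).trans ?_
    simp_rw [hνfst]; exact hT
  have hνsum : Summable fun q : C × C' => (ν q).toReal :=
    ENNReal.summable_toReal (by rw [hν1]; exact ENNReal.one_ne_top)
  apply ciSup_le
  rintro ⟨S, hS⟩
  simp only
  -- compute the two mixture measures on S
  have hAe : (Measure.sum fun τ => T τ • P τ) S = ∑' q : C × C', ν q * P q.1 S := by
    rw [Measure.sum_apply _ hS]
    refine Eq.trans ?_ (ENNReal.tsum_prod (f := fun a b => ν (a, b) * P a S)).symm
    congr 1; funext τ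
    rw [ENNReal.tsum_mul_right, hνfst, Measure.smul_apply, smul_eq_mul]
  have hBe : (Measure.sum fun τ' => T' τ' • Q τ') S = ∑' q : C × C', ν q * Q q.2 S := by
    rw [Measure.sum_apply _ hS]
    refine Eq.trans ?_ (ENNReal.tsum_prod (f := fun a b => ν (a, b) * Q b S)).symm
    refine Eq.trans ?_ (ENNReal.tsum_comm (f := fun b a => ν (a, b) * Q b S))
    congr 1; funext τ'
    rw [ENNReal.tsum_mul_right, hνsnd, Measure.smul_apply, smul_eq_mul]
  have hle : ∀ q : C × C', ν q * P q.1 S ≤ ν q := fun q => by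
    have := (hP q.1).measure_univ
    calc ν q * P q.1 S ≤ ν q * P q.1 Set.univ :=
          mul_le_mul_right (measure_mono (Set.subset_univ S)) _
      _ = ν q := by rw [this, mul_one]
  have hle' : ∀ q : C × C', ν q * Q q.2 S ≤ ν q := fun q => by
    have := (hQ q.2).measure_univ
    calc ν q * Q q.2 S ≤ ν q * Q q.2 Set.univ :=
          mul_le_mul_right (measure_mono (Set.subset_univ S)) _
      _ = ν q := by rw [this, mul_one]
  have hνne : ∀ q : C × C', ν q ≠ ∞ := fun q =>
    ne_top_of_le_ne_top (by rw [hν1]; exact ENNReal.one_ne_top) (ENNReal.le_tsum q)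
  have hAfin : ∀ q : C × C', ν q * P q.1 S ≠ ∞ := fun q => ne_top_of_le_ne_top (hνne q) (hle q)
  have hBfin : ∀ q : C × C', ν q * Q q.2 S ≠ ∞ := fun q => ne_top_of_le_ne_top (hνne q) (hle' q)
  have hAsumfin : ∑' q : C × C', ν q * P q.1 S ≠ ∞ :=
    ne_top_of_le_ne_top (by rw [hν1]; exact ENNReal.one_ne_top) (ENNReal.tsum_le_tsum hle)
  have hBsumfin : ∑' q : C × C', ν q * Q q.2 S ≠ ∞ :=
    ne_top_of_le_ne_top (by rw [hν1]; exact ENNReal.one_ne_top) (ENNReal.tsum_le_tsum hle')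
  have hAsummable : Summable fun q : C × C' => (ν q * P q.1 S).toReal :=
    ENNReal.summable_toReal hAsumfin
  have hBsummable : Summable fun q : C × C' => (ν q * Q q.2 S).toReal :=
    ENNReal.summable_toReal hBsumfin
  rw [hAe, hBe, ENNReal.tsum_toReal_eq hAfin, ENNReal.tsum_toReal_eq hBfin,
    ← tsum_mul_left, ← Summable.tsum_sub hAsummable (hBsummable.mul_left _)]
  have hRsummable : Summable fun q : C × C' => (ν q).toReal * hsDiv ε (P q.1) (Q q.2) := by
    refine Summable.of_nonneg_of_le (fun q => mul_nonneg ENNReal.toReal_nonneg ?_)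
      (fun q => ?_) hνsum
    · exact hsDiv_nonneg ε (P q.1) (Q q.2)
    · calc (ν q).toReal * hsDiv ε (P q.1) (Q q.2) ≤ (ν q).toReal * 1 :=
          mul_le_mul_of_nonneg_left (hsDiv_le_one ε (P q.1) (Q q.2)) ENNReal.toReal_nonneg
        _ = (ν q).toReal := mul_one _
  refine Summable.tsum_le_tsum (fun q => ?_) (hAsummable.sub (hBsummable.mul_left _)) hRsummable
  rw [ENNReal.toReal_mul, ENNReal.toReal_mul]
  have key : (P q.1 S).toReal - Real.exp ε * (Q q.2 S).toReal ≤ hsDiv ε (P q.1) (Q q.2) :=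
    le_ciSup (hsDiv_bdd ε (P q.1) (Q q.2)) ⟨S, hS⟩
  calc (ν q).toReal * (P q.1 S).toReal - Real.exp ε * ((ν q).toReal * (Q q.2 S).toReal)
      = (ν q).toReal * ((P q.1 S).toReal - Real.exp ε * (Q q.2 S).toReal) := by ring
    _ ≤ (ν q).toReal * hsDiv ε (P q.1) (Q q.2) :=
        mul_le_mul_of_nonneg_left key ENNReal.toReal_nonneg

end
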